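/- arXiv:2603.22030 — 2 statements merged into one kernel-verified Lean document; each statement's English description precedes it below -/
import Mathlib

section
/- Let n, d, r ∈ ℕ, J an n × d real matrix, Υ an n × n positive semidefinite real matrix, τ > 0, and H = Jᵀ Υ J + τ⁻²·I_d. Let Z be a d × r real matrix whose columns are orthonormal (Zᵀ Z = I_r) and satisfy J·Z = 0. Then Zᵀ H⁻¹ Z = τ²·I_r. -/
open Matrix

lemma smul_one_posDef {d : ℕ} {c : ℝ} (hc : 0 < c) :
    (c • (1 : Matrix (Fin d) (Fin d) ℝ)).PosDef := by
  have h : c • (1 : Matrix (Fin d) (Fin d) ℝ) = Matrix.diagonal (fun _ => c) := by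
    ext i j
    by_cases hij : i = j <;> simp [Matrix.diagonal, Matrix.one_apply, hij]
  rw [h]
  exact Matrix.posDef_diagonal_iff.mpr (fun _ => hc)

/-- For `H = Jᵀ Υ J + τ⁻² I` with `Υ` positive semidefinite and `τ > 0`,
and `Z` with orthonormal columns (`Zᵀ Z = I`) satisfying `J Z = 0`, the projected inverse
precision equals the prior covariance: `Zᵀ H⁻¹ Z = τ² I`. -/
theorem projected_posterior_covariance_is_prior (n d r : ℕ)
    (J : Matrix (Fin n) (Fin d) ℝ) (Ups : Matrix (Fin n) (Fin n) ℝ)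
    (hUps : Ups.PosSemidef) (τ : ℝ) (hτ : 0 < τ)
    (Z : Matrix (Fin d) (Fin r) ℝ) (hZ : Zᵀ * Z = 1) (hJZ : J * Z = 0) :
    Zᵀ * (Jᵀ * Ups * J + (τ⁻¹ ^ 2) • (1 : Matrix (Fin d) (Fin d) ℝ))⁻¹ * Z
      = τ ^ 2 • (1 : Matrix (Fin r) (Fin r) ℝ) := by
  set H : Matrix (Fin d) (Fin d) ℝ :=
    Jᵀ * Ups * J + (τ⁻¹ ^ 2) • (1 : Matrix (Fin d) (Fin d) ℝ) with hH
  have h1 : (Jᵀ * Ups * J).PosSemidef := by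
    have := hUps.conjTranspose_mul_mul_same J
    simpa using this
  have hc : 0 < τ⁻¹ ^ 2 := by positivity
  have hHpd : H.PosDef := by
    rw [hH, add_comm]
    exact (smul_one_posDef hc).add_posSemidef h1
  have hdet : IsUnit H.det := hHpd.det_pos.ne'.isUnit
  have hHZ : H * Z = (τ⁻¹ ^ 2) • Z := by
    rw [hH, Matrix.add_mul, Matrix.mul_assoc, hJZ, Matrix.mul_zero,
      Matrix.smul_mul, Matrix.one_mul, zero_add]
  have key : H⁻¹ * Z = (τ ^ 2) • Z := by
    have h2 : H⁻¹ * (H * Z) = Z := by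
      rw [← Matrix.mul_assoc, Matrix.nonsing_inv_mul H hdet, Matrix.one_mul]
    rw [hHZ, Matrix.mul_smul] at h2
    calc H⁻¹ * Z = (τ ^ 2) • ((τ⁻¹ ^ 2) • (H⁻¹ * Z)) := by
          rw [smul_smul]
          field_simp
          rw [one_smul]
        _ = (τ ^ 2) • Z := by rw [h2]
  rw [Matrix.mul_assoc, key, Matrix.mul_smul, hZ]
end

section
/- Fix α > 0 and define for integers k ≥ 2 the quantity C_k = Γ(α + 1/2)²·Γ(kα)/(Γ(α)²·Γ(kα + 1)) − [Γ(α + 1/2)·Γ(kα)/(Γ(α)·Γ(kα + 1/2))]². Then C_k = O(k^{−2}) as k → ∞: there exist a constant C > 0 and K such that |C_k| ≤ C·k^{−2} for all k ≥ K. -/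
/-- Midpoint log-convexity of the Gamma function:
`Γ((a+b)/2)² ≤ Γ(a) Γ(b)` for positive `a`, `b`. -/
lemma gamma_midpoint_sq_le (a b : ℝ) (ha : 0 < a) (hb : 0 < b) :
    Real.Gamma ((a + b) / 2) ^ 2 ≤ Real.Gamma a * Real.Gamma b := by
  have h := Real.convexOn_log_Gamma.2 (Set.mem_Ioi.mpr ha) (Set.mem_Ioi.mpr hb)
    (by norm_num : (0:ℝ) ≤ 1/2) (by norm_num : (0:ℝ) ≤ 1/2) (by norm_num)
  simp only [smul_eq_mul, Function.comp_apply] at h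
  have hmid : 0 < (a + b) / 2 := by linarith
  have h1 := Real.Gamma_pos_of_pos ha
  have h2 := Real.Gamma_pos_of_pos hb
  have hm := Real.Gamma_pos_of_pos hmid
  have hlog : Real.log (Real.Gamma ((a + b) / 2) ^ 2)
      ≤ Real.log (Real.Gamma a * Real.Gamma b) := by
    rw [Real.log_pow, Real.log_mul h1.ne' h2.ne']
    have heq : (1/2) * a + (1/2) * b = (a + b) / 2 := by ring
    rw [heq] at h
    push_cast
    linarith
  exact (Real.log_le_log_iff (by positivity) (by positivity)).mp hlog

set_option maxHeartbeats 1000000 in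
/-- For fixed `α > 0`, the quantity
`C_k = Γ(α+1/2)²Γ(kα)/(Γ(α)²Γ(kα+1)) − [Γ(α+1/2)Γ(kα)/(Γ(α)Γ(kα+1/2))]²`
satisfies `C_k = O(k^{−2})` as `k → ∞`. -/
theorem dirichlet_sqrt_covariance_decay (α : ℝ) (hα : 0 < α) :
    ∃ (C : ℝ) (K : ℕ), 0 < C ∧ ∀ k : ℕ, K ≤ k →
      |Real.Gamma (α + 1 / 2) ^ 2 * Real.Gamma ((k : ℝ) * α) /
          (Real.Gamma α ^ 2 * Real.Gamma ((k : ℝ) * α + 1)) -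
        (Real.Gamma (α + 1 / 2) * Real.Gamma ((k : ℝ) * α) /
          (Real.Gamma α * Real.Gamma ((k : ℝ) * α + 1 / 2))) ^ 2|
        ≤ C / (k : ℝ) ^ 2 := by
  have hΓα := Real.Gamma_pos_of_pos hα
  have hΓα2 := Real.Gamma_pos_of_pos (by linarith : (0:ℝ) < α + 1/2)
  set A : ℝ := Real.Gamma (α + 1/2) / Real.Gamma α with hA
  have hApos : 0 < A := div_pos hΓα2 hΓα
  refine ⟨A ^ 2 / (2 * α ^ 2), 1, by positivity, ?_⟩
  intro k hk
  have hkpos : (0:ℝ) < (k : ℝ) := by exact_mod_cast hk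
  set x : ℝ := (k : ℝ) * α with hxdef
  have hx : 0 < x := mul_pos hkpos hα
  have hP := Real.Gamma_pos_of_pos hx
  have hQ := Real.Gamma_pos_of_pos (by linarith : (0:ℝ) < x + 1/2)
  set P : ℝ := Real.Gamma x with hPdef
  set Q : ℝ := Real.Gamma (x + 1/2) with hQdef
  have hG1 : Real.Gamma (x + 1) = x * P := Real.Gamma_add_one hx.ne'
  have hG2 : Real.Gamma (x + 1/2 + 1) = (x + 1/2) * Q :=
    Real.Gamma_add_one (by linarith : x + 1/2 ≠ 0)
  -- upper bound : Q² ≤ x P²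
  have hupper : Q ^ 2 ≤ x * P ^ 2 := by
    have h := gamma_midpoint_sq_le x (x + 1) hx (by linarith)
    have heq : (x + (x + 1)) / 2 = x + 1/2 := by ring
    rw [heq, hG1] at h
    nlinarith
  -- lower bound : x² P² ≤ (x + 1/2) Q²
  have hlower : x ^ 2 * P ^ 2 ≤ (x + 1/2) * Q ^ 2 := by
    have h := gamma_midpoint_sq_le (x + 1/2) (x + 3/2) (by linarith) (by linarith)
    have heq : (x + 1/2 + (x + 3/2)) / 2 = x + 1 := by ring
    have heq2 : (x : ℝ) + 3/2 = x + 1/2 + 1 := by ring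
    rw [heq, heq2, hG2, hG1] at h
    nlinarith
  have hu1 : 1 / x ≤ P ^ 2 / Q ^ 2 := by
    rw [div_le_div_iff₀ hx (by positivity)]
    nlinarith
  have hu2 : P ^ 2 / Q ^ 2 ≤ (x + 1/2) / x ^ 2 := by
    rw [div_le_div_iff₀ (by positivity) (by positivity)]
    nlinarith
  clear_value Q
  clear_value P
  clear_value x
  have hkey : Real.Gamma (α + 1 / 2) ^ 2 * P /
          (Real.Gamma α ^ 2 * Real.Gamma (x + 1)) -
        (Real.Gamma (α + 1 / 2) * P /
          (Real.Gamma α * Q)) ^ 2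
      = A ^ 2 * (1 / x - P ^ 2 / Q ^ 2) := by
    rw [hG1, hA]
    field_simp [hx.ne', hP.ne', hQ.ne', hΓα.ne']
  rw [hkey, abs_mul, abs_of_nonneg (by positivity : (0:ℝ) ≤ A ^ 2)]
  have habs : |1 / x - P ^ 2 / Q ^ 2| ≤ 1 / (2 * x ^ 2) := by
    have hdiff : (x + 1/2) / x ^ 2 - 1 / x = 1 / (2 * x ^ 2) := by
      field_simp
      ring
    rw [abs_le]
    constructor <;> nlinarith [hu1, hu2, sq_nonneg x]
  calc A ^ 2 * |1 / x - P ^ 2 / Q ^ 2| ≤ A ^ 2 * (1 / (2 * x ^ 2)) := by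
        exact mul_le_mul_of_nonneg_left habs (by positivity)
    _ = A ^ 2 / (2 * α ^ 2) / (k : ℝ) ^ 2 := by
        rw [hxdef, mul_pow, div_div, mul_one_div]
        congr 1
        ring
end
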